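/- For real numbers q and x with |q| < 1, the series sum over r ≥ 1 of q^r sin(r x)/r converges to arctan(q sin x / (1 - q cos x)). -/

import Mathlib

open Complex in
theorem sin_series_arctan (q x : ℝ) (hq : |q| < 1) :
    HasSum (fun r : ℕ => q ^ (r + 1) * Real.sin ((r + 1) * x) / (r + 1))
      (Real.arctan (q * Real.sin x / (1 - q * Real.cos x))) := by
  set z : ℂ := (q : ℂ) * Complex.exp (x * I) with hz
  have hznorm : ‖z‖ < 1 := by
    simpa [hz, Complex.norm_exp, ← Complex.ofReal_mul] using hq
  have H := Complex.hasSum_taylorSeries_neg_log hznorm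
  -- shift index
  have H1 : HasSum (fun n : ℕ => z ^ (n + 1) / (n + 1)) (-Complex.log (1 - z)) := by
    have := (hasSum_nat_add_iff' (f := fun n : ℕ => z ^ n / n) 1).mpr H
    simpa using this
  -- real and imaginary parts of z
  have hre : z.re = q * Real.cos x := by
    simp [hz, Complex.exp_ofReal_mul_I_re]
  have him : z.im = q * Real.sin x := by
    simp [hz, Complex.exp_ofReal_mul_I_im]
  have hrecos : 0 < (1 - z).re := by
    rw [Complex.sub_re, Complex.one_re, hre]
    have : |q * Real.cos x| < 1 := by
      rw [abs_mul]
      calc |q| * |Real.cos x| ≤ |q| * 1 := by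
            exact mul_le_mul_of_nonneg_left (Real.abs_cos_le_one x) (abs_nonneg q)
        _ < 1 := by simpa using hq
    have := (abs_lt.mp this).2
    linarith
  have hne : (1 - z) ≠ 0 := by
    intro h
    rw [h] at hrecos; simp at hrecos
  -- take imaginary parts
  have H2 := H1.mapL Complex.imCLM
  have key : (Complex.imCLM (-Complex.log (1 - z)))
      = Real.arctan (q * Real.sin x / (1 - q * Real.cos x)) := by
    have harg : Complex.arg (1 - z) = Real.arctan ((1 - z).im / (1 - z).re) := by
      rw [← Complex.tan_arg]
      refine (Real.arctan_tan ?_ ?_).symm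
      · exact Complex.neg_pi_div_two_lt_arg_iff.mpr (Or.inl hrecos)
      · exact Complex.arg_lt_pi_div_two_iff.mpr (Or.inl hrecos)
    simp only [ContinuousLinearMap.coe_coe, Complex.imCLM_apply, Complex.neg_im,
      Complex.log_im, harg]
    rw [Complex.sub_im, Complex.one_im, Complex.sub_re, Complex.one_re, him, hre]
    rw [zero_sub, neg_div, Real.arctan_neg, neg_neg]
  rw [key] at H2
  convert H2 using 2 with n
  have hzpow : z ^ (n + 1) = (q : ℂ) ^ (n + 1) * Complex.exp (((n + 1 : ℕ) : ℂ) * (x * I)) := by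
    rw [hz, mul_pow, ← Complex.exp_nat_mul]
  simp only [ContinuousLinearMap.coe_coe, Complex.imCLM_apply]
  have hcast : ((n : ℂ) + 1) = ((n + 1 : ℕ) : ℂ) := by push_cast; ring
  rw [hcast, Complex.div_natCast_im, hzpow]
  rw [Complex.mul_im]
  have hc2 : (((n + 1 : ℕ) : ℂ)) * ((x : ℂ) * I) = ((((n + 1 : ℕ) : ℝ) * x : ℝ) : ℂ) * I := by
    push_cast; ring
  rw [hc2, Complex.exp_ofReal_mul_I_re, Complex.exp_ofReal_mul_I_im]
  push_cast
  norm_cast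
  ring
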